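/- Let n ≥ 2 and 2 ≤ k ≤ n with (n,k) ≠ (3,2) and (n,k) ≠ (4,3), and let C ⊆ S_n be the conjugacy class of k-cycles (cycle type (k,1^{n−k})). Then Cellini's cyclic descent map on C is not closed under cyclic rotation: it is NOT the case that for every π ∈ C there exists π' ∈ C with CDes(π') = sh(CDes(π)). -/

import Mathlib

open Finset

/-- One-line notation value of a permutation at (1-indexed) position `i`:
`oneline π i = π_i` (as a number in `{1,…,n}`), and `0` if `i` is out of range. -/
def oneline {n : ℕ} (π : Equiv.Perm (Fin n)) (i : ℕ) : ℕ :=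
  if h : i - 1 < n then (π ⟨i - 1, h⟩ : ℕ) + 1 else 0

/-- Cellini's cyclic descent set `CDes(π) = {i ∈ [n] : π_i > π_{i+1}}`,
with the convention `π_{n+1} := π_1`. -/
def CDes {n : ℕ} (π : Equiv.Perm (Fin n)) : Finset ℕ :=
  (Finset.Icc 1 n).filter fun i => oneline π (i % n + 1) < oneline π i

/-- The cyclic shift map on subsets of `[n]`, induced by `i ↦ i + 1 (mod n)`. -/
def sh (n : ℕ) (S : Finset ℕ) : Finset ℕ := S.image fun i => i % n + 1

/-- The cycle type of a permutation, including fixed points as parts equal to `1`;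
a multiset of parts summing to `n`. -/
def fullCycleType {n : ℕ} (π : Equiv.Perm (Fin n)) : Multiset ℕ :=
  π.cycleType + Multiset.replicate (n - π.support.card) 1

open Equiv Equiv.Perm

section helpers
variable {n : ℕ}

lemma oneline_eq (π : Equiv.Perm (Fin n)) {i : ℕ} (h : i - 1 < n) :
    oneline π i = (π ⟨i - 1, h⟩ : ℕ) + 1 := dif_pos h

lemma oneline_pos (π : Equiv.Perm (Fin n)) {i : ℕ} (h1 : 1 ≤ i) (h2 : i ≤ n) :
    1 ≤ oneline π i := by
  rw [oneline_eq π (by omega)]; omega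

lemma oneline_le (π : Equiv.Perm (Fin n)) {i : ℕ} (h1 : 1 ≤ i) (h2 : i ≤ n) :
    oneline π i ≤ n := by
  rw [oneline_eq π (by omega)]
  have := (π ⟨i - 1, by omega⟩).isLt; omega

lemma oneline_inj (π : Equiv.Perm (Fin n)) {i j : ℕ} (hi1 : 1 ≤ i) (hi2 : i ≤ n)
    (hj1 : 1 ≤ j) (hj2 : j ≤ n) (h : oneline π i = oneline π j) : i = j := by
  rw [oneline_eq π (show i - 1 < n by omega), oneline_eq π (show j - 1 < n by omega)] at h
  have := π.injective (Fin.val_injective (by omega : ((π ⟨i-1, by omega⟩ : Fin n) : ℕ) = (π ⟨j-1, by omega⟩ : ℕ)))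
  have := Fin.mk.injEq (i-1) (by omega : i - 1 < n) (j-1) (by omega) ▸ this
  omega

lemma mem_CDes {π : Equiv.Perm (Fin n)} {i : ℕ} :
    i ∈ CDes π ↔ (1 ≤ i ∧ i ≤ n) ∧ oneline π (i % n + 1) < oneline π i := by
  simp [CDes, Finset.mem_filter, Finset.mem_Icc]

end helpers

section chains

lemma chain_up {O : ℕ → ℕ} {a b : ℕ} (h : ∀ i, a ≤ i → i < b → O i < O (i + 1)) :
    ∀ j, a ≤ j → j ≤ b → O a + (j - a) ≤ O j := by
  intro j
  induction j with
  | zero => intro h1 _; interval_cases a; simp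
  | succ m ih =>
    intro h1 h2
    rcases Nat.lt_or_ge a (m+1) with hlt | hge
    · have := ih (by omega) (by omega)
      have := h m (by omega) (by omega)
      omega
    · have : a = m + 1 := by omega
      subst this; simp

lemma chain_down {O : ℕ → ℕ} {a b : ℕ} (h : ∀ i, a ≤ i → i < b → O (i + 1) < O i) :
    ∀ j, a ≤ j → j ≤ b → O j + (j - a) ≤ O a := by
  intro j
  induction j with
  | zero => intro h1 _; interval_cases a; simp
  | succ m ih =>
    intro h1 h2
    rcases Nat.lt_or_ge a (m+1) with hlt | hge
    · have := ih (by omega) (by omega)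
      have := h m (by omega) (by omega)
      omega
    · have : a = m + 1 := by omega
      subst this; simp

end chains

section extraction
variable {n : ℕ}

lemma extract_cycle {π : Equiv.Perm (Fin n)} {k : ℕ} (hk2 : 2 ≤ k) (hkn : k ≤ n)
    (h : fullCycleType π = k ::ₘ Multiset.replicate (n - k) 1) :
    π.cycleType = {k} ∧ π.support.card = k := by
  have hs : π.support.card ≤ n := by
    have := Finset.card_le_univ π.support
    simpa using this
  have hcount : Multiset.count 1 π.cycleType = 0 :=
    Multiset.count_eq_zero.2 (fun h1 => by
      have := Equiv.Perm.two_le_of_mem_cycleType h1; omega)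
  have hc := congrArg (Multiset.count 1) h
  rw [fullCycleType] at hc
  simp [Multiset.count_add, Multiset.count_cons, Multiset.count_replicate, hcount,
    if_pos rfl, if_neg (by omega : (1:ℕ) ≠ k)] at hc
  have hsk : π.support.card = k := by omega
  refine ⟨?_, hsk⟩
  have h2 : π.cycleType + Multiset.replicate (n - k) 1
      = {k} + Multiset.replicate (n - k) 1 := by
    rw [Multiset.singleton_add]
    rw [fullCycleType, hsk] at h
    exact h
  exact add_right_cancel h2

lemma orbit_pair {α : Type*} [Fintype α] [DecidableEq α] {f : Equiv.Perm α} (hf : f.IsCycle)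
    {a b : α} (hab : f a = b) (hba : f b = a) (hne : a ≠ b) : f.support.card ≤ 2 := by
  have hsub : f.support ⊆ {a, b} := by
    intro y hy
    obtain ⟨x, hx, hall⟩ := hf
    have h1 : f.SameCycle x y := hall (Equiv.Perm.mem_support.1 hy)
    have h2 : f.SameCycle x a := hall (show f a ≠ a by rw [hab]; exact fun h => hne h.symm)
    obtain ⟨i, hi⟩ := h2.symm.trans h1
    have := Equiv.Perm.zpow_apply_eq_of_apply_apply_eq_self (x := a)
      (by rw [hab, hba]) i
    rw [hi] at this
    rcases this with h | h
    · simp [← h]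
    · rw [hab] at h; simp [← h]
  calc f.support.card ≤ ({a, b} : Finset α).card := Finset.card_le_card hsub
    _ ≤ 2 := Finset.card_insert_le _ _ |>.trans (by simp)

lemma orbit_triple {α : Type*} [Fintype α] [DecidableEq α] {f : Equiv.Perm α} (hf : f.IsCycle)
    {a b c : α} (hab : f a = b) (hbc : f b = c) (hca : f c = a) (hne : a ≠ b) :
    f.support.card ≤ 3 := by
  have key : ∀ i : ℤ, (f ^ i) a = a ∨ (f ^ i) a = b ∨ (f ^ i) a = c := by
    intro i
    induction i using Int.induction_on with
    | zero => left; simp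
    | succ m ih =>
      have hstep : f ^ ((m : ℤ) + 1) = f * f ^ (m : ℤ) := by
        rw [add_comm, zpow_add, zpow_one]
      rw [hstep, Equiv.Perm.mul_apply]
      rcases ih with h | h | h <;> rw [h]
      · right; left; exact hab
      · right; right; exact hbc
      · left; exact hca
    | pred m ih =>
      have hstep : f ^ (-(m : ℤ) - 1) = f⁻¹ * f ^ (-(m : ℤ)) := by
        rw [sub_eq_add_neg, add_comm, zpow_add, zpow_neg_one]
      rw [hstep, Equiv.Perm.mul_apply]
      have ia : f⁻¹ a = c := by rw [← hca, ← Equiv.Perm.mul_apply, inv_mul_cancel, Equiv.Perm.one_apply]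
      have ib : f⁻¹ b = a := by rw [← hab, ← Equiv.Perm.mul_apply, inv_mul_cancel, Equiv.Perm.one_apply]
      have ic : f⁻¹ c = b := by rw [← hbc, ← Equiv.Perm.mul_apply, inv_mul_cancel, Equiv.Perm.one_apply]
      rcases ih with h | h | h <;> rw [h]
      · right; right; exact ia
      · left; exact ib
      · right; left; exact ic
  have hsub : f.support ⊆ {a, b, c} := by
    intro y hy
    obtain ⟨x, hx, hall⟩ := hf
    have h1 : f.SameCycle x y := hall (Equiv.Perm.mem_support.1 hy)
    have h2 : f.SameCycle x a := hall (show f a ≠ a by rw [hab]; exact fun h => hne h.symm)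
    obtain ⟨i, hi⟩ := h2.symm.trans h1
    rcases key i with h | h | h <;> rw [hi] at h <;> simp [← h]
  calc f.support.card ≤ ({a, b, c} : Finset α).card := Finset.card_le_card hsub
    _ ≤ 3 := by
      refine (Finset.card_insert_le _ _).trans ?_
      have := Finset.card_insert_le b ({c} : Finset α)
      simp at this ⊢
      omega

end extraction

section caseA
variable {m : ℕ}

lemma oneline_finRotate {j : ℕ} (h1 : 1 ≤ j) (h2 : j ≤ m + 1) :
    oneline (finRotate (m + 2)) j = j + 1 := by
  rw [oneline_eq _ (show j - 1 < m + 2 by omega), finRotate_succ_apply]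
  rw [Fin.val_add_one]
  have : (⟨j - 1, by omega⟩ : Fin (m+2)) ≠ Fin.last (m+1) := by
    simp [Fin.ext_iff, Fin.val_last]; omega
  rw [if_neg this]
  simp; omega

lemma oneline_finRotate_last :
    oneline (finRotate (m + 2)) (m + 2) = 1 := by
  rw [oneline_eq _ (show m + 2 - 1 < m + 2 by omega), finRotate_succ_apply]
  have : (⟨m + 2 - 1, by omega⟩ : Fin (m+2)) = Fin.last (m+1) := by
    simp [Fin.ext_iff, Fin.val_last]
  rw [this]
  simp

lemma CDes_finRotate : CDes (finRotate (m + 2)) = {m + 1} := by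
  ext i
  rw [mem_CDes, Finset.mem_singleton]
  constructor
  · rintro ⟨⟨h1, h2⟩, hlt⟩
    by_contra hne
    rcases (by omega : i ≤ m ∨ i = m + 2) with h | h
    · rw [Nat.mod_eq_of_lt (by omega), oneline_finRotate (by omega) (by omega),
        oneline_finRotate (by omega) (by omega)] at hlt
      omega
    · subst h
      rw [Nat.mod_self, zero_add, oneline_finRotate (by omega) (by omega),
        oneline_finRotate_last] at hlt
      omega
  · rintro rfl
    refine ⟨⟨by omega, by omega⟩, ?_⟩
    rw [Nat.mod_eq_of_lt (by omega : m + 1 < m + 2)]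
    rw [show m + 1 + 1 = m + 2 from rfl, oneline_finRotate_last,
      oneline_finRotate (by omega) (le_refl (m + 1))]
    omega

lemma eq_one_of_CDes_singleton {n : ℕ} (hn : 2 ≤ n) {π' : Equiv.Perm (Fin n)}
    (h : CDes π' = {n}) : π' = 1 := by
  have hmono : ∀ i, 1 ≤ i → i < n → oneline π' i < oneline π' (i + 1) := by
    intro i h1 h2
    have : i ∉ CDes π' := by rw [h, Finset.mem_singleton]; omega
    rw [mem_CDes] at this
    push_neg at this
    have hle := this ⟨h1, by omega⟩
    rw [Nat.mod_eq_of_lt (by omega)] at hle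
    have : oneline π' (i+1) ≠ oneline π' i := fun hh =>
      (by omega : i + 1 ≠ i) (oneline_inj π' (by omega) (by omega) h1 (by omega) hh)
    omega
  have hkey : ∀ j, 1 ≤ j → j ≤ n → oneline π' j = j := by
    intro j h1 h2
    have hup := chain_up hmono j h1 h2
    have hup2 := chain_up (fun i hi1 hi2 => hmono i (by omega) hi2) n (by omega : j ≤ n) le_rfl
    have hO1 : 1 ≤ oneline π' 1 := oneline_pos π' le_rfl (by omega)
    have hOn : oneline π' n ≤ n := oneline_le π' (by omega) le_rfl
    have hOj : oneline π' j ≤ n := oneline_le π' h1 h2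
    omega
  apply Equiv.ext
  intro x
  have hx := hkey ((x : ℕ) + 1) (by omega) (by omega : (x:ℕ)+1 ≤ n)
  rw [oneline_eq π' (show (x:ℕ)+1-1 < n by omega)] at hx
  have : (⟨(x:ℕ)+1-1, by omega⟩ : Fin n) = x := by simp [Fin.ext_iff]
  rw [this] at hx
  simp [Fin.ext_iff]
  omega

end caseA

section caseBdef
variable {n k : ℕ}

def fB (hk2 : 2 ≤ k) (hkn : k ≤ n) : Fin n → Fin n := fun p =>
  if h0 : (p : ℕ) = 0 then ⟨k - 1, by omega⟩
  else if h1 : (p : ℕ) ≤ k - 1 then ⟨(p : ℕ) - 1, by omega⟩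
  else p

lemma fB_inj (hk2 : 2 ≤ k) (hkn : k ≤ n) : Function.Injective (fB hk2 hkn) := by
  intro p q h
  unfold fB at h
  have hp := p.isLt
  have hq := q.isLt
  apply Fin.ext
  split_ifs at h <;> (have := congrArg Fin.val h; simp -failIfUnchanged at this) <;> omega

noncomputable def permB (hk2 : 2 ≤ k) (hkn : k ≤ n) : Equiv.Perm (Fin n) :=
  Equiv.ofBijective _ (Finite.injective_iff_bijective.mp (fB_inj hk2 hkn))

lemma permB_apply (hk2 : 2 ≤ k) (hkn : k ≤ n) (p : Fin n) :
    permB hk2 hkn p = fB hk2 hkn p := rfl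

lemma permB_support (hk2 : 2 ≤ k) (hkn : k ≤ n) :
    (permB hk2 hkn).support = Finset.Iic (⟨k - 1, by omega⟩ : Fin n) := by
  ext p
  have hp := p.isLt
  rw [Equiv.Perm.mem_support, Finset.mem_Iic, permB_apply, Fin.le_def]
  unfold fB
  split_ifs with h0 h1
  · simp [Fin.ext_iff]; omega
  · simp [Fin.ext_iff]; omega
  · simp [Fin.ext_iff]; omega

lemma permB_isCycle (hk2 : 2 ≤ k) (hkn : k ≤ n) : (permB hk2 hkn).IsCycle := by
  have happly : ∀ (m : ℕ) (hm : m < n), 1 ≤ m → m ≤ k - 1 →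
      permB hk2 hkn ⟨m, hm⟩ = ⟨m - 1, by omega⟩ := by
    intro m hm h1 h2
    rw [permB_apply]
    unfold fB
    rw [dif_neg (by simp only [Fin.val_mk]; omega)]
    rw [dif_pos (by simp only [Fin.val_mk]; omega)]
  have hchain : ∀ m : ℕ, (hm : m ≤ k - 1) →
      (permB hk2 hkn).SameCycle ⟨0, by omega⟩ ⟨m, by omega⟩ := by
    intro m
    induction m with
    | zero => intro _; exact Equiv.Perm.SameCycle.refl _ _
    | succ l ih =>
      intro hm
      refine (ih (by omega)).trans ?_
      refine ⟨-1, ?_⟩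
      simp only [zpow_neg_one]
      rw [Equiv.Perm.inv_def, Equiv.symm_apply_eq]
      rw [happly (l + 1) (by omega) (by omega) (by omega)]
      exact Fin.ext (by simp)
  refine ⟨⟨0, by omega⟩, ?_, ?_⟩
  · rw [permB_apply]
    unfold fB
    rw [dif_pos rfl]
    intro hc
    have := congrArg Fin.val hc
    simp only [Fin.val_mk] at this
    omega
  · intro y hy
    have hy' : (y : ℕ) ≤ k - 1 := by
      by_contra hc
      apply hy
      rw [permB_apply]
      unfold fB
      rw [dif_neg (by omega), dif_neg (by omega)]
    have := hchain (y : ℕ) hy'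
    have hyy : (⟨(y : ℕ), y.isLt⟩ : Fin n) = y := Fin.ext rfl
    rwa [show (⟨(y:ℕ), by omega⟩ : Fin n) = y from Fin.ext rfl] at this

lemma permB_cycleType (hk2 : 2 ≤ k) (hkn : k ≤ n) :
    (permB hk2 hkn).cycleType = {k} ∧ (permB hk2 hkn).support.card = k := by
  have hcard : (permB hk2 hkn).support.card = k := by
    rw [permB_support, Fin.card_Iic]
    simp only [Fin.val_mk]
    omega
  refine ⟨?_, hcard⟩
  rw [(permB_isCycle hk2 hkn).cycleType, hcard]

lemma oneline_permB (hk2 : 2 ≤ k) (hkn : k ≤ n) {j : ℕ} (h1 : 1 ≤ j) (h2 : j ≤ n) :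
    oneline (permB hk2 hkn) j = if j = 1 then k else if j ≤ k then j - 1 else j := by
  rw [oneline_eq _ (show j - 1 < n by omega), permB_apply]
  unfold fB
  rcases (by omega : j = 1 ∨ (2 ≤ j ∧ j ≤ k) ∨ (k + 1 ≤ j ∧ j ≤ n)) with h | ⟨ha, hb⟩ | ⟨ha, hb⟩
  · subst h
    rw [dif_pos rfl]
    simp only [Fin.val_mk]
    split_ifs <;> omega
  · rw [dif_neg (by simp only [Fin.val_mk]; omega), dif_pos (by simp only [Fin.val_mk]; omega)]
    simp only [Fin.val_mk]
    split_ifs <;> omega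
  · rw [dif_neg (by simp only [Fin.val_mk]; omega), dif_neg (by simp only [Fin.val_mk]; omega)]
    simp only [Fin.val_mk]
    split_ifs <;> omega

lemma CDes_permB (hk2 : 2 ≤ k) (hkn : k + 1 ≤ n) :
    CDes (permB hk2 (by omega : k ≤ n)) = {1, n} := by
  ext j
  rw [mem_CDes, Finset.mem_insert, Finset.mem_singleton]
  constructor
  · rintro ⟨⟨h1, h2⟩, hlt⟩
    by_contra hne
    push_neg at hne
    obtain ⟨hne1, hne2⟩ := hne
    rw [Nat.mod_eq_of_lt (by omega),
      oneline_permB hk2 (by omega) (by omega) (by omega),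
      oneline_permB hk2 (by omega) (by omega) (by omega)] at hlt
    split_ifs at hlt <;> omega
  · rintro (rfl | rfl)
    · refine ⟨⟨le_rfl, by omega⟩, ?_⟩
      rw [Nat.mod_eq_of_lt (by omega),
        oneline_permB hk2 (by omega) (by omega) (by omega),
        oneline_permB hk2 (by omega) (by omega) (by omega)]
      split_ifs <;> omega
    · refine ⟨⟨by omega, le_rfl⟩, ?_⟩
      rw [Nat.mod_self, zero_add,
        oneline_permB hk2 (by omega) (by omega) (by omega),
        oneline_permB hk2 (by omega) (by omega) (by omega)]
      split_ifs <;> omega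

end caseBdef

section caseC
variable {n : ℕ}

def fC (hn : 5 ≤ n) : Fin n → Fin n := fun p =>
  if h0 : (p : ℕ) = 0 then p
  else if h1 : (p : ℕ) = 1 then ⟨(n + 1) / 2, by omega⟩
  else if h2 : (p : ℕ) ≤ n - (n + 1) / 2 then ⟨n + 1 - (p : ℕ), by omega⟩
  else ⟨n - (p : ℕ), by have := p.isLt; omega⟩

lemma fC_inj (hn : 5 ≤ n) : Function.Injective (fC hn) := by
  intro p q h
  unfold fC at h
  have hp := p.isLt
  have hq := q.isLt
  apply Fin.ext
  split_ifs at h <;> (have := congrArg Fin.val h; simp -failIfUnchanged only [Fin.val_mk] at this) <;> omega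

noncomputable def permC (hn : 5 ≤ n) : Equiv.Perm (Fin n) :=
  Equiv.ofBijective _ (Finite.injective_iff_bijective.mp (fC_inj hn))

lemma permC_apply (hn : 5 ≤ n) (p : Fin n) : permC hn p = fC hn p := rfl

lemma permC_zero (hn : 5 ≤ n) : permC hn ⟨0, by omega⟩ = ⟨0, by omega⟩ := by
  rw [permC_apply]
  unfold fC
  rw [dif_pos rfl]

lemma permC_one (hn : 5 ≤ n) : permC hn ⟨1, by omega⟩ = ⟨(n + 1) / 2, by omega⟩ := by
  rw [permC_apply]
  unfold fC
  rw [dif_neg (by simp only [Fin.val_mk]; omega), dif_pos (by simp only [Fin.val_mk])]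

lemma permC_mid (hn : 5 ≤ n) (m : ℕ) (h1 : 2 ≤ m) (h2 : m ≤ n - (n + 1) / 2) :
    permC hn ⟨m, by omega⟩ = ⟨n + 1 - m, by omega⟩ := by
  rw [permC_apply]
  unfold fC
  rw [dif_neg (by simp only [Fin.val_mk]; omega), dif_neg (by simp only [Fin.val_mk]; omega),
    dif_pos (by simp only [Fin.val_mk]; omega)]

lemma permC_hi (hn : 5 ≤ n) (m : ℕ) (h1 : n - (n + 1) / 2 < m) (h2 : m ≤ n - 1) :
    permC hn ⟨m, by omega⟩ = ⟨n - m, by omega⟩ := by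
  rw [permC_apply]
  unfold fC
  rw [dif_neg (by simp only [Fin.val_mk]; omega), dif_neg (by simp only [Fin.val_mk]; omega),
    dif_neg (by simp only [Fin.val_mk]; omega)]

lemma permC_support (hn : 5 ≤ n) :
    (permC hn).support = Finset.univ.erase ⟨0, by omega⟩ := by
  ext p
  rw [Equiv.Perm.mem_support, Finset.mem_erase]
  simp only [Finset.mem_univ, and_true]
  constructor
  · intro h hc
    subst hc
    exact h (permC_zero hn)
  · intro h
    have hp := p.isLt
    have hv : (p : ℕ) ≠ 0 := fun hc => h (Fin.ext hc)
    have hrw : p = ⟨(p : ℕ), hp⟩ := Fin.ext rfl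
    rcases (by omega : (p:ℕ) = 1 ∨ (2 ≤ (p:ℕ) ∧ (p:ℕ) ≤ n - (n+1)/2) ∨
        (n - (n+1)/2 < (p:ℕ) ∧ (p:ℕ) ≤ n - 1)) with h1 | ⟨ha, hb⟩ | ⟨ha, hb⟩
    · rw [hrw]
      simp only [h1]
      rw [show (⟨1, by omega⟩ : Fin n) = ⟨1, by omega⟩ from rfl, permC_one hn]
      intro hc
      have := congrArg Fin.val hc
      simp only [Fin.val_mk] at this
      omega
    · rw [hrw, permC_mid hn _ ha hb]
      intro hc
      have := congrArg Fin.val hc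
      simp only [Fin.val_mk] at this
      omega
    · rw [hrw, permC_hi hn _ ha hb]
      intro hc
      have := congrArg Fin.val hc
      simp only [Fin.val_mk] at this
      omega

lemma permC_support_card (hn : 5 ≤ n) : (permC hn).support.card = n - 1 := by
  rw [permC_support hn, Finset.card_erase_of_mem (Finset.mem_univ _)]
  simp

lemma permC_isCycle (hn : 5 ≤ n) : (permC hn).IsCycle := by
  have hL1 : ∀ m : ℕ, ∀ (h1 : 2 ≤ m) (h2 : m ≤ n - (n + 1) / 2),
      permC hn (permC hn ⟨m, by omega⟩) = ⟨m - 1, by omega⟩ := by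
    intro m h1 h2
    rw [permC_mid hn m h1 h2]
    rw [show (⟨n + 1 - m, by omega⟩ : Fin n) = ⟨n + 1 - m, by omega⟩ from rfl,
      permC_hi hn (n + 1 - m) (by omega) (by omega)]
    exact Fin.ext (by simp only [Fin.val_mk]; omega)
  -- L2 : the low chain
  have hL2 : ∀ m : ℕ, ∀ (hm1 : 1 ≤ m) (hm2 : m ≤ n - (n + 1) / 2),
      (permC hn).SameCycle ⟨1, by omega⟩ ⟨m, by omega⟩ := by
    intro m
    induction m with
    | zero => omega
    | succ l ih =>
      intro _ hm
      rcases Nat.eq_or_lt_of_le (show 1 ≤ l + 1 from by omega) with h | h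
      · rw [show (⟨l + 1, by omega⟩ : Fin n) = ⟨1, by omega⟩ from
          Fin.ext (by simp only [Fin.val_mk]; omega)]
      · have hl : 1 ≤ l := by omega
        have := ih hl (by omega)
        have hstep : (⟨l, by omega⟩ : Fin n) = permC hn (permC hn ⟨l + 1, by omega⟩) := by
          rw [hL1 (l + 1) (by omega) hm]
          exact Fin.ext (by simp)
        rw [hstep] at this
        rwa [Equiv.Perm.sameCycle_apply_right, Equiv.Perm.sameCycle_apply_right] at this
  refine ⟨⟨1, by omega⟩, ?_, ?_⟩
  · rw [permC_one hn]
    intro hc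
    have := congrArg Fin.val hc
    simp only [Fin.val_mk] at this
    omega
  · intro y hy
    have hp := y.isLt
    have hv : (y : ℕ) ≠ 0 := by
      intro hc
      apply hy
      rw [show y = ⟨0, by omega⟩ from Fin.ext hc]
      exact permC_zero hn
    have hrw : y = ⟨(y : ℕ), hp⟩ := Fin.ext rfl
    rcases (by omega : (1 ≤ (y:ℕ) ∧ (y:ℕ) ≤ n - (n+1)/2) ∨ (y:ℕ) = (n+1)/2 ∨
        ((n+1)/2 + 1 ≤ (y:ℕ) ∧ (y:ℕ) ≤ n - 1)) with ⟨ha, hb⟩ | h1 | ⟨ha, hb⟩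
    · rw [hrw]; exact hL2 _ ha hb
    · have : y = permC hn ⟨1, by omega⟩ := by
        rw [permC_one hn]; exact Fin.ext (by simp only [Fin.val_mk]; omega)
      rw [this, Equiv.Perm.sameCycle_apply_right]
    · have : y = permC hn ⟨n + 1 - (y:ℕ), by omega⟩ := by
        rw [permC_mid hn (n + 1 - (y:ℕ)) (by omega) (by omega)]
        exact Fin.ext (by simp only [Fin.val_mk]; omega)
      rw [this, Equiv.Perm.sameCycle_apply_right]
      exact hL2 _ (by omega) (by omega)

lemma oneline_permC (hn : 5 ≤ n) {j : ℕ} (h1 : 1 ≤ j) (h2 : j ≤ n) :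
    oneline (permC hn) j =
      if j = 1 then 1 else if j = 2 then (n + 1) / 2 + 1
      else if j ≤ n - (n + 1) / 2 + 1 then n + 3 - j else n + 2 - j := by
  rw [oneline_eq _ (show j - 1 < n by omega)]
  rcases (by omega : j = 1 ∨ j = 2 ∨ (3 ≤ j ∧ j ≤ n - (n+1)/2 + 1) ∨
      (n - (n+1)/2 + 2 ≤ j ∧ j ≤ n)) with h | h | ⟨ha, hb⟩ | ⟨ha, hb⟩
  · subst h
    rw [show (⟨1 - 1, by omega⟩ : Fin n) = ⟨0, by omega⟩ from rfl, permC_zero hn]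
    simp only [Fin.val_mk]
    split_ifs <;> omega
  · subst h
    rw [show (⟨2 - 1, by omega⟩ : Fin n) = ⟨1, by omega⟩ from rfl, permC_one hn]
    simp only [Fin.val_mk]
    split_ifs <;> omega
  · rw [show (⟨j - 1, by omega⟩ : Fin n) = ⟨j - 1, by omega⟩ from rfl,
      permC_mid hn (j - 1) (by omega) (by omega)]
    simp only [Fin.val_mk]
    split_ifs <;> omega
  · rw [show (⟨j - 1, by omega⟩ : Fin n) = ⟨j - 1, by omega⟩ from rfl,
      permC_hi hn (j - 1) (by omega) (by omega)]
    simp only [Fin.val_mk]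
    split_ifs <;> omega

lemma CDes_permC (hn : 5 ≤ n) : CDes (permC hn) = Finset.Icc 3 n := by
  ext j
  rw [mem_CDes, Finset.mem_Icc]
  constructor
  · rintro ⟨⟨hj1, hj2⟩, hlt⟩
    refine ⟨?_, hj2⟩
    by_contra hc
    rcases (by omega : j = 1 ∨ j = 2) with h | h <;> subst h
    · rw [Nat.mod_eq_of_lt (by omega), oneline_permC hn (by omega) (by omega),
        oneline_permC hn (by omega) (by omega)] at hlt
      split_ifs at hlt <;> omega
    · rw [Nat.mod_eq_of_lt (by omega), oneline_permC hn (by omega) (by omega),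
        oneline_permC hn (by omega) (by omega)] at hlt
      split_ifs at hlt <;> omega
  · rintro ⟨hj1, hj2⟩
    refine ⟨⟨by omega, hj2⟩, ?_⟩
    rcases (by omega : j = n ∨ j < n) with h | h
    · subst h
      rw [Nat.mod_self, zero_add, oneline_permC hn (by omega) (by omega),
        oneline_permC hn (by omega) (by omega)]
      split_ifs <;> omega
    · rw [Nat.mod_eq_of_lt (by omega), oneline_permC hn (by omega) (by omega),
        oneline_permC hn (by omega) (by omega)]
      split_ifs <;> omega

lemma caseC_impossible (hn : 5 ≤ n) {π' : Equiv.Perm (Fin n)}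
    (hC : CDes π' = insert 1 (Finset.Icc 4 n)) (hcyc : π'.IsCycle)
    (hcard : π'.support.card = n - 1) : False := by
  have hmem : ∀ i : ℕ, i ∈ CDes π' ↔ (i = 1 ∨ (4 ≤ i ∧ i ≤ n)) := by
    intro i; rw [hC]; simp
  have h1 : oneline π' 2 < oneline π' 1 := by
    have := (hmem 1).2 (Or.inl rfl)
    rw [mem_CDes] at this
    have h' := this.2
    rwa [Nat.mod_eq_of_lt (by omega)] at h'
  have h2 : oneline π' 2 < oneline π' 3 := by
    have hnot : 2 ∉ CDes π' := by rw [hmem]; omega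
    rw [mem_CDes] at hnot
    push_neg at hnot
    have := hnot ⟨by omega, by omega⟩
    rw [Nat.mod_eq_of_lt (by omega), show (2:ℕ) + 1 = 3 from rfl] at this
    have hne : oneline π' 3 ≠ oneline π' 2 := fun hh =>
      (by omega : (3:ℕ) ≠ 2) (oneline_inj π' (by omega) (by omega) (by omega) (by omega) hh)
    omega
  have hdec : ∀ i, 4 ≤ i → i < n → oneline π' (i + 1) < oneline π' i := by
    intro i hi1 hi2
    have := (hmem i).2 (Or.inr ⟨hi1, by omega⟩)
    rw [mem_CDes] at this
    have h' := this.2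
    rwa [Nat.mod_eq_of_lt (by omega)] at h'
  have hlast : oneline π' 1 < oneline π' n := by
    have := (hmem n).2 (Or.inr ⟨by omega, le_rfl⟩)
    rw [mem_CDes] at this
    have h' := this.2
    rwa [Nat.mod_self, zero_add] at h'
  have hchain : ∀ j, 4 ≤ j → j ≤ n → oneline π' n + (n - j) ≤ oneline π' j := by
    intro j hj1 hj2
    exact chain_down (a := j) (b := n) (fun i hi1 hi2 => hdec i (by omega) hi2) n hj2 le_rfl
  have hO4 : oneline π' 4 ≤ n := oneline_le π' (by omega) (by omega)
  have hOn4 : oneline π' n ≤ 4 := by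
    have := hchain 4 le_rfl (by omega)
    omega
  have hO2pos : 1 ≤ oneline π' 2 := oneline_pos π' (by omega) (by omega)
  -- O 1 ∈ {2, 3}
  have hO1 : oneline π' 1 = 2 ∨ oneline π' 1 = 3 := by omega
  -- translate oneline values to permutation applications
  have happ : ∀ i : ℕ, (h1 : 1 ≤ i) → (h2 : i ≤ n) → ∀ v : ℕ, (hv : v < n) →
      oneline π' i = v + 1 → π' ⟨i - 1, by omega⟩ = ⟨v, hv⟩ := by
    intro i hi1 hi2 v hv hov
    rw [oneline_eq π' (show i - 1 < n by omega)] at hov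
    exact Fin.ext (by simp only [Fin.val_mk]; omega)
  rcases hO1 with hO1 | hO1
  · -- π' swaps 0 and 1
    have hO2 : oneline π' 2 = 1 := by omega
    have ha : π' ⟨0, by omega⟩ = ⟨1, by omega⟩ := by
      have := happ 1 (by omega) (by omega) 1 (by omega) (by omega)
      exact this
    have hb : π' ⟨1, by omega⟩ = ⟨0, by omega⟩ := by
      have := happ 2 (by omega) (by omega) 0 (by omega) (by omega)
      exact this
    have := orbit_pair hcyc ha hb (by intro hc; have := congrArg Fin.val hc; simp at this)
    omega
  · -- O 1 = 3
    have hge4 : ∀ j, 4 ≤ j → j ≤ n → 4 ≤ oneline π' j := by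
      intro j hj1 hj2
      have := hchain j hj1 hj2
      omega
    have hO2' : oneline π' 2 = 1 := by
      rcases (by omega : oneline π' 2 = 1 ∨ oneline π' 2 = 2) with h | h
      · exact h
      · exfalso
        -- value 1 is never attained
        obtain ⟨p, hp⟩ : ∃ p : Fin n, π' p = ⟨0, by omega⟩ := ⟨π'.symm _, Equiv.apply_symm_apply _ _⟩
        have hov : oneline π' ((p : ℕ) + 1) = 1 := by
          rw [oneline_eq π' (show (p:ℕ) + 1 - 1 < n from by have := p.isLt; omega)]
          rw [show (⟨(p:ℕ) + 1 - 1, by have := p.isLt; omega⟩ : Fin n) = p from Fin.ext (by simp)]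
          rw [hp]
        have hpr := p.isLt
        rcases (by omega : (p:ℕ) + 1 = 1 ∨ (p:ℕ) + 1 = 2 ∨ (p:ℕ) + 1 = 3 ∨
            (4 ≤ (p:ℕ) + 1 ∧ (p:ℕ) + 1 ≤ n)) with hc | hc | hc | ⟨hc1, hc2⟩
        · rw [hc] at hov; omega
        · rw [hc] at hov; omega
        · rw [hc] at hov; omega
        · have := hge4 _ hc1 hc2; omega
    have hO3 : oneline π' 3 = 2 := by
      -- value 2 is attained at position 3
      obtain ⟨p, hp⟩ : ∃ p : Fin n, π' p = ⟨1, by omega⟩ := ⟨π'.symm _, Equiv.apply_symm_apply _ _⟩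
      have hov : oneline π' ((p : ℕ) + 1) = 2 := by
        rw [oneline_eq π' (show (p:ℕ) + 1 - 1 < n from by have := p.isLt; omega)]
        rw [show (⟨(p:ℕ) + 1 - 1, by have := p.isLt; omega⟩ : Fin n) = p from Fin.ext (by simp)]
        rw [hp]
      have hpr := p.isLt
      rcases (by omega : (p:ℕ) + 1 = 1 ∨ (p:ℕ) + 1 = 2 ∨ (p:ℕ) + 1 = 3 ∨
          (4 ≤ (p:ℕ) + 1 ∧ (p:ℕ) + 1 ≤ n)) with hc | hc | hc | ⟨hc1, hc2⟩
      · rw [hc] at hov; omega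
      · rw [hc] at hov; omega
      · rw [hc] at hov; exact hov
      · have := hge4 _ hc1 hc2; omega
    have ha : π' ⟨0, by omega⟩ = ⟨2, by omega⟩ :=
      happ 1 (by omega) (by omega) 2 (by omega) (by omega)
    have hb : π' ⟨2, by omega⟩ = ⟨1, by omega⟩ :=
      happ 3 (by omega) (by omega) 1 (by omega) (by omega)
    have hc : π' ⟨1, by omega⟩ = ⟨0, by omega⟩ :=
      happ 2 (by omega) (by omega) 0 (by omega) (by omega)
    have := orbit_triple hcyc ha hb hc (by intro hcc; have := congrArg Fin.val hcc; simp at this)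
    omega

end caseC

section shlemmas
variable {n : ℕ}

lemma sh_singleton (hn : 2 ≤ n) : sh n {n - 1} = {n} := by
  rw [sh, Finset.image_singleton, Nat.mod_eq_of_lt (by omega)]
  congr 1
  omega

lemma sh_pair (hn : 3 ≤ n) : sh n {1, n} = ({1, 2} : Finset ℕ) := by
  rw [sh, Finset.image_insert, Finset.image_singleton, Nat.mod_eq_of_lt (by omega), Nat.mod_self]
  ext j
  simp
  omega

lemma sh_Icc (hn : 5 ≤ n) : sh n (Finset.Icc 3 n) = insert 1 (Finset.Icc 4 n) := by
  ext j
  simp only [sh, Finset.mem_image, Finset.mem_Icc, Finset.mem_insert]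
  constructor
  · rintro ⟨i, ⟨hi1, hi2⟩, rfl⟩
    rcases (by omega : i = n ∨ i < n) with h | h
    · subst h; rw [Nat.mod_self]; left; rfl
    · rw [Nat.mod_eq_of_lt h]; right; omega
  · rintro (rfl | ⟨h1, h2⟩)
    · exact ⟨n, ⟨by omega, le_rfl⟩, by rw [Nat.mod_self]⟩
    · exact ⟨j - 1, ⟨by omega, by omega⟩, by rw [Nat.mod_eq_of_lt (by omega)]; omega⟩

lemma fullA (hn : 2 ≤ n) :
    fullCycleType (finRotate n) = n ::ₘ Multiset.replicate (n - n) 1 := by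
  have hct := cycleType_finRotate_of_le hn
  have hcard : (finRotate n).support.card = n := by
    rw [← Equiv.Perm.sum_cycleType, hct]
    simp
  rw [fullCycleType, hct, hcard]
  simp

lemma full_one (hn : 2 ≤ n) :
    fullCycleType (1 : Equiv.Perm (Fin n)) ≠ n ::ₘ Multiset.replicate (n - n) 1 := by
  intro h
  rw [fullCycleType, Equiv.Perm.cycleType_one, Equiv.Perm.support_one] at h
  have := congrArg (Multiset.count n) h
  simp only [Multiset.count_add, Multiset.count_zero, Multiset.count_replicate,
    Multiset.count_cons] at this
  split_ifs at this <;> omega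

end shlemmas

-- the impossibility side for case B
lemma fixed_of_CDes_pair {n : ℕ} (hn : 3 ≤ n) {π' : Equiv.Perm (Fin n)}
    (h : CDes π' = {1, 2}) {x : Fin n} (hx : π' x = x) : (x : ℕ) = 1 := by
  have hmem : ∀ i : ℕ, i ∈ CDes π' ↔ (i = 1 ∨ i = 2) := by
    intro i; rw [h]; simp
  have h1 : oneline π' 2 < oneline π' 1 := by
    have := (hmem 1).2 (Or.inl rfl)
    rw [mem_CDes] at this
    have h2 := this.2
    rwa [Nat.mod_eq_of_lt (by omega)] at h2
  have hn' : oneline π' n < oneline π' 1 := by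
    have hnot : n ∉ CDes π' := by rw [hmem]; omega
    rw [mem_CDes] at hnot
    push_neg at hnot
    have := hnot ⟨by omega, le_rfl⟩
    rw [Nat.mod_self, zero_add] at this
    have hne : oneline π' 1 ≠ oneline π' n := fun hh =>
      (by omega : (1:ℕ) ≠ n) (oneline_inj π' (by omega) (by omega) (by omega) le_rfl hh)
    omega
  have hmono : ∀ i, 3 ≤ i → i < n → oneline π' i < oneline π' (i + 1) := by
    intro i hi1 hi2
    have hnot : i ∉ CDes π' := by rw [hmem]; omega
    rw [mem_CDes] at hnot
    push_neg at hnot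
    have := hnot ⟨by omega, by omega⟩
    rw [Nat.mod_eq_of_lt (by omega)] at this
    have hne : oneline π' (i + 1) ≠ oneline π' i := fun hh =>
      (by omega : i + 1 ≠ i) (oneline_inj π' (by omega) (by omega) (by omega) (by omega) hh)
    omega
  have hfix : oneline π' ((x : ℕ) + 1) = (x : ℕ) + 1 := by
    rw [oneline_eq π' (show (x:ℕ)+1-1 < n by omega)]
    have : (⟨(x:ℕ)+1-1, by omega⟩ : Fin n) = x := by simp [Fin.ext_iff]
    rw [this, hx]
  by_contra hne
  set j := (x : ℕ) + 1 with hj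
  have hjr : 1 ≤ j ∧ j ≤ n := ⟨by omega, by omega⟩
  rcases (by omega : j = 1 ∨ 3 ≤ j) with h | h
  · have := oneline_pos π' (show 1 ≤ 2 by omega) (show 2 ≤ n by omega)
    rw [h] at hfix
    omega
  · have hup2 := chain_up (fun i hi1 hi2 => hmono i (by omega) hi2) n (by omega : j ≤ n) le_rfl
    have hO1 : oneline π' 1 ≤ n := oneline_le π' le_rfl (by omega)
    omega

section mainaux
variable {n k : ℕ}

lemma fullB (hk2 : 2 ≤ k) (hkn : k ≤ n) :
    fullCycleType (permB hk2 hkn) = k ::ₘ Multiset.replicate (n - k) 1 := by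
  obtain ⟨hct, hcard⟩ := permB_cycleType hk2 hkn
  rw [fullCycleType, hct, hcard, Multiset.singleton_add]

lemma fullC (hn : 5 ≤ n) :
    fullCycleType (permC hn) = (n - 1) ::ₘ Multiset.replicate (n - (n - 1)) 1 := by
  have hct : (permC hn).cycleType = {n - 1} := by
    rw [(permC_isCycle hn).cycleType, permC_support_card hn]
  rw [fullCycleType, hct, permC_support_card hn, Multiset.singleton_add]

lemma CDes_finRotate_of_le (hn : 2 ≤ n) : CDes (finRotate n) = {n - 1} := by
  obtain ⟨m, rfl⟩ : ∃ m, n = m + 2 := ⟨n - 2, by omega⟩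
  rw [CDes_finRotate]
  congr 1

end mainaux

/-- For `n ≥ 2` and `2 ≤ k ≤ n` with `(n,k) ≠ (3,2)` and `(n,k) ≠ (4,3)`,
Cellini's cyclic descent map on the conjugacy class of `k`-cycles in `S_n` is not
closed under cyclic rotation. -/
theorem stmt16 (n k : ℕ) (hn : 2 ≤ n) (hk2 : 2 ≤ k) (hkn : k ≤ n)
    (h32 : ¬ (n = 3 ∧ k = 2)) (h43 : ¬ (n = 4 ∧ k = 3)) :
    ¬ ∀ π : Equiv.Perm (Fin n),
        fullCycleType π = k ::ₘ Multiset.replicate (n - k) 1 →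
        ∃ π' : Equiv.Perm (Fin n),
          fullCycleType π' = k ::ₘ Multiset.replicate (n - k) 1 ∧
          CDes π' = sh n (CDes π) := by
  intro hclosed
  have h32' : n ≠ 3 ∨ k ≠ 2 := by tauto
  have h43' : n ≠ 4 ∨ k ≠ 3 := by tauto
  rcases (by omega : k = n ∨ (2 ≤ k ∧ k + 2 ≤ n) ∨ (k = n - 1 ∧ 5 ≤ n))
    with hA | ⟨_, hB⟩ | ⟨hCk, hn5⟩
  · -- Case A : k = n, witness finRotate n
    subst hA
    obtain ⟨π', hty, hcd⟩ := hclosed (finRotate _) (fullA hn)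
    rw [CDes_finRotate_of_le hn, sh_singleton hn] at hcd
    have := eq_one_of_CDes_singleton hn hcd
    subst this
    exact full_one hn hty
  · -- Case B : 2 ≤ k ≤ n - 2, witness permB
    have hkn' : k ≤ n := by omega
    obtain ⟨π', hty, hcd⟩ := hclosed (permB hk2 hkn') (fullB hk2 hkn')
    have hCB : CDes (permB hk2 hkn') = {1, n} := by
      have := CDes_permB hk2 (show k + 1 ≤ n by omega)
      exact this
    rw [hCB, sh_pair (by omega)] at hcd
    obtain ⟨hct, hcard⟩ := extract_cycle hk2 hkn' hty
    -- π' has at least two fixed points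
    have hsub : π'.support ⊆ Finset.univ := Finset.subset_univ _
    have hcard2 : 2 ≤ (Finset.univ \ π'.support).card := by
      rw [Finset.card_sdiff_of_subset hsub, Finset.card_univ, Fintype.card_fin]
      omega
    obtain ⟨a, ha, b, hb, hab⟩ := Finset.one_lt_card.mp (by omega : 1 < (Finset.univ \ π'.support).card)
    have hfa : π' a = a := by
      have := (Finset.mem_sdiff.mp ha).2
      exact Equiv.Perm.notMem_support.mp this
    have hfb : π' b = b := by
      have := (Finset.mem_sdiff.mp hb).2
      exact Equiv.Perm.notMem_support.mp this
    have hva := fixed_of_CDes_pair (by omega) hcd hfa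
    have hvb := fixed_of_CDes_pair (by omega) hcd hfb
    exact hab (Fin.ext (by omega))
  · -- Case C : k = n - 1, n ≥ 5, witness permC
    subst hCk
    obtain ⟨π', hty, hcd⟩ := hclosed (permC hn5) (fullC hn5)
    rw [CDes_permC hn5, sh_Icc hn5] at hcd
    obtain ⟨hct, hcard⟩ := extract_cycle (by omega) (by omega) hty
    have hcyc : π'.IsCycle := by
      refine Equiv.Perm.card_cycleType_eq_one.mp ?_
      rw [hct]
      rfl
    exact caseC_impossible hn5 hcd hcyc hcard
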